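/- Let ψ₀ < ψ, where ψ₀ is the unique real root of ψ³−ψ−1=0, let φ_c = (1+ψ)/ψ², γ > 0 and τ > 0. Define ω(τ) = (ψ − φ_c)/(ψ + φ_c γ τ). Then 0 < ω(τ) < 1 and ψ(1+γτ)/(ψ + γ φ_c τ) = 1 + ω(τ) γ τ; consequently, for any τ' ≤ φ_c τ, ψ(1+γτ)/(ψ+γτ') ≥ 1 + ω(τ)γτ. -/
import Mathlib


theorem omega_properties (ψ₀ ψ γ τ : ℝ)
    (hroot : ψ₀ ^ 3 - ψ₀ - 1 = 0) (hψ : ψ₀ < ψ) (hγ : 0 < γ) (hτ : 0 < τ) :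
    let φc := (1 + ψ) / ψ ^ 2
    let ω := (ψ - φc) / (ψ + φc * γ * τ)
    0 < ω ∧ ω < 1 ∧
      ψ * (1 + γ * τ) / (ψ + γ * φc * τ) = 1 + ω * γ * τ ∧
      ∀ τ' : ℝ, 0 < τ' → τ' ≤ φc * τ →
        ψ * (1 + γ * τ) / (ψ + γ * τ') ≥ 1 + ω * γ * τ := by
  intro φc ω
  have hψ₀1 : (1 : ℝ) < ψ₀ := by nlinarith [sq_nonneg ψ₀, sq_nonneg (ψ₀ - 1), sq_nonneg (ψ₀ + 1)]
  have hψ1 : (1 : ℝ) < ψ := lt_trans hψ₀1 hψ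
  have hψpos : (0 : ℝ) < ψ := by linarith
  have hcube : ψ ^ 3 - ψ - 1 > 0 := by
    nlinarith [mul_pos (sub_pos.mpr hψ) (show (0:ℝ) < ψ^2 + ψ*ψ₀ + ψ₀^2 - 1 by nlinarith)]
  have hφcpos : 0 < φc := by positivity
  have hφclt : φc < ψ := by
    rw [div_lt_iff₀ (by positivity)]
    nlinarith
  have hden : 0 < ψ + φc * γ * τ := by positivity
  have hωpos : 0 < ω := div_pos (by linarith) hden
  have hωlt : ω < 1 := by
    rw [div_lt_one hden]
    nlinarith [mul_pos hφcpos (mul_pos hγ hτ)]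
  have heq : ψ * (1 + γ * τ) / (ψ + γ * φc * τ) = 1 + ω * γ * τ := by
    have hden' : ψ + γ * φc * τ ≠ 0 := by positivity
    show ψ * (1 + γ * τ) / (ψ + γ * φc * τ) = 1 + (ψ - φc) / (ψ + φc * γ * τ) * γ * τ
    field_simp
    ring
  refine ⟨hωpos, hωlt, heq, fun τ' hτ' hle => ?_⟩
  rw [← heq]
  apply div_le_div_of_nonneg_left (by positivity) (by positivity)
  nlinarith
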